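/- Let {E_i}_{i=1}^n be a POVM on ℂ^d and let (X_a)_{a=1}^{d²} be any family of Hermitian d×d complex matrices that is orthonormal with respect to the Hilbert–Schmidt inner product ⟨A,B⟩ = tr(AB). Then Σ_{a=1}^{d²} tr( (Σ_{l=1}^n √E_l · X_a · √E_l − X_a)² ) = Σ_{l,m=1}^n (tr(√E_l √E_m))² − 2 Σ_{l=1}^n (tr √E_l)² + d². In particular, the squared Frobenius norm of the difference between the Lüders channel of the POVM and the identity channel equals this trace expression, independently of the choice of orthonormal Hermitian basis. -/

import Mathlib

open Matrix BigOperators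
open scoped ComplexOrder

/-- The positive semidefinite square root, as `Matrix.PosSemidef.sqrt` was defined in Mathlib
of December 2024 (removed since). -/
noncomputable def Matrix.PosSemidef.sqrt {𝕜 : Type*} [RCLike 𝕜] {n : Type*} [Fintype n]
    [DecidableEq n] {A : Matrix n n 𝕜} (hA : A.PosSemidef) : Matrix n n 𝕜 :=
  hA.1.eigenvectorUnitary.1 * diagonal ((↑) ∘ Real.sqrt ∘ hA.1.eigenvalues) *
    (star hA.1.eigenvectorUnitary : Matrix n n 𝕜)

private lemma trace_mul_double {d : ℕ} (M N : Matrix (Fin d) (Fin d) ℂ) :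
    (M * N).trace = ∑ i, ∑ j, M i j * N j i := by
  simp [Matrix.trace, Matrix.diag, Matrix.mul_apply]

private lemma X_expand {d : ℕ} (hd : 0 < d)
    (X : Fin (d ^ 2) → Matrix (Fin d) (Fin d) ℂ)
    (hXortho : ∀ a b, (X a * X b).trace = if a = b then 1 else 0)
    (M : Matrix (Fin d) (Fin d) ℂ) :
    M = ∑ a, (M * X a).trace • X a := by
  have hli : LinearIndependent ℂ X := by
    rw [Fintype.linearIndependent_iff]
    intro g hg b
    have h := congrArg (fun M => (M * X b).trace) hg
    simpa [Finset.sum_mul, smul_mul_assoc, Matrix.trace_sum, hXortho] using h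
  have hcard : Fintype.card (Fin (d ^ 2)) = Module.finrank ℂ (Matrix (Fin d) (Fin d) ℂ) := by
    simp [Module.finrank_matrix, pow_two]
  haveI : Nonempty (Fin (d ^ 2)) := ⟨⟨0, by positivity⟩⟩
  set B := basisOfLinearIndependentOfCardEqFinrank hli hcard with hB
  have hcoe : ⇑B = X := coe_basisOfLinearIndependentOfCardEqFinrank hli hcard
  have hrepr : ∀ b, B.repr M b = (M * X b).trace := by
    intro b
    conv_rhs => rw [← B.sum_repr M]
    simp [Finset.sum_mul, smul_mul_assoc, Matrix.trace_sum, hcoe, hXortho]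
  conv_lhs => rw [← B.sum_repr M]
  refine Finset.sum_congr rfl fun a _ => ?_
  rw [hrepr, hcoe]

private lemma X_complete {d : ℕ} (hd : 0 < d)
    (X : Fin (d ^ 2) → Matrix (Fin d) (Fin d) ℂ)
    (hXortho : ∀ a b, (X a * X b).trace = if a = b then 1 else 0)
    (p q l i : Fin d) :
    ∑ a, X a q p * X a l i
      = (if p = l then (1 : ℂ) else 0) * (if q = i then 1 else 0) := by
  have h := X_expand hd X hXortho (Matrix.single p q 1)
  have h2 := congrFun (congrFun h l) i
  have htr : ∀ a, (Matrix.single p q 1 * X a).trace = X a q p := by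
    intro a
    rw [trace_mul_double]
    simp [Matrix.single, Finset.sum_ite_eq, ite_and]
  rw [Matrix.sum_apply] at h2
  simp only [htr, Matrix.smul_apply, smul_eq_mul] at h2
  rw [← h2]
  by_cases h1 : p = l <;> by_cases h3 : q = i <;>
    simp [Matrix.single, h1, h3]

private lemma key_sum {d : ℕ} (hd : 0 < d)
    (X : Fin (d ^ 2) → Matrix (Fin d) (Fin d) ℂ)
    (hXortho : ∀ a b, (X a * X b).trace = if a = b then 1 else 0)
    (A B : Matrix (Fin d) (Fin d) ℂ) :
    ∑ a, (A * X a * B * X a).trace = A.trace * B.trace := by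
  have e1 : ∀ a, (A * X a * B * X a).trace
      = ∑ i, ∑ j, ∑ k, ∑ l, A i k * B j l * (X a k j * X a l i) := by
    intro a
    rw [show A * X a * B * X a = (A * X a) * (B * X a) by rw [Matrix.mul_assoc]]
    rw [trace_mul_double]
    refine Finset.sum_congr rfl fun i _ => Finset.sum_congr rfl fun j _ => ?_
    simp only [Matrix.mul_apply, Finset.sum_mul_sum]
    refine Finset.sum_congr rfl fun k _ => Finset.sum_congr rfl fun l _ => ?_
    ring
  simp only [e1]
  have e2 : ∑ a, ∑ i, ∑ j, ∑ k, ∑ l, A i k * B j l * (X a k j * X a l i)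
      = ∑ i, ∑ j, ∑ k, ∑ l, A i k * B j l *
          ((if j = l then (1 : ℂ) else 0) * (if k = i then 1 else 0)) := by
    rw [Finset.sum_comm]
    refine Finset.sum_congr rfl fun i _ => ?_
    rw [Finset.sum_comm]
    refine Finset.sum_congr rfl fun j _ => ?_
    rw [Finset.sum_comm]
    refine Finset.sum_congr rfl fun k _ => ?_
    rw [Finset.sum_comm]
    refine Finset.sum_congr rfl fun l _ => ?_
    rw [← Finset.mul_sum, X_complete hd X hXortho j k l i]
  rw [e2]
  have e3 : ∑ i, ∑ j, ∑ k, ∑ l, A i k * B j l *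
          ((if j = l then (1 : ℂ) else 0) * (if k = i then 1 else 0))
      = ∑ i, ∑ j, A i i * B j j := by
    refine Finset.sum_congr rfl fun i _ => Finset.sum_congr rfl fun j _ => ?_
    rw [Finset.sum_comm]
    simp [Finset.sum_ite_eq', mul_ite]
  rw [e3, ← Finset.sum_mul_sum]
  simp [Matrix.trace, Matrix.diag]

set_option maxHeartbeats 1600000 in
/-- For a POVM `{E_i}` on `ℂ^d` and any family `(X_a)_{a=1}^{d²}` of Hermitian
matrices orthonormal w.r.t. the Hilbert–Schmidt inner product `tr(AB)`, the squared Frobenius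
norm of the difference between the Lüders channel and the identity channel equals
`Σ_{l,m} (tr(√E_l √E_m))² − 2 Σ_l (tr √E_l)² + d²`. -/
theorem luders_channel_frobenius_distance
    (d n : ℕ) (E : Fin n → Matrix (Fin d) (Fin d) ℂ)
    (hE : ∀ i, (E i).PosSemidef)
    (hsum : ∑ i, E i = 1)
    (X : Fin (d ^ 2) → Matrix (Fin d) (Fin d) ℂ)
    (hXherm : ∀ a, (X a).IsHermitian)
    (hXortho : ∀ a b, (X a * X b).trace = if a = b then 1 else 0) :
    ∑ a, ((∑ l, (hE l).sqrt * X a * (hE l).sqrt - X a) ^ 2).trace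
      = ∑ l, ∑ m, ((hE l).sqrt * (hE m).sqrt).trace ^ 2
        - 2 * ∑ l, ((hE l).sqrt).trace ^ 2 + (d : ℂ) ^ 2 := by
  rcases Nat.eq_zero_or_pos d with hd | hd
  · subst hd
    simp [Matrix.trace]
  set S : Fin n → Matrix (Fin d) (Fin d) ℂ := fun l => (hE l).sqrt with hS
  have key := key_sum hd X hXortho
  -- expand the square
  have expand : ∀ a, ((∑ l, S l * X a * S l - X a) ^ 2).trace
      = ((∑ l, S l * X a * S l) * (∑ m, S m * X a * S m)).trace
        - ((∑ l, S l * X a * S l) * X a).trace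
        - (X a * (∑ l, S l * X a * S l)).trace
        + (X a * X a).trace := by
    intro a
    rw [sq, sub_mul, mul_sub, mul_sub, Matrix.trace_sub, Matrix.trace_sub, Matrix.trace_sub]
    ring
  show ∑ a, ((∑ l, S l * X a * S l - X a) ^ 2).trace = ∑ l, ∑ m, (S l * S m).trace ^ 2 - 2 * ∑ l, (S l).trace ^ 2 + (d : ℂ) ^ 2
  simp only [expand]
  rw [Finset.sum_add_distrib, Finset.sum_sub_distrib, Finset.sum_sub_distrib]
  have T1 : ∑ a, ((∑ l, S l * X a * S l) * (∑ m, S m * X a * S m)).trace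
      = ∑ l, ∑ m, ((S l) * (S m)).trace ^ 2 := by
    have : ∀ a, ((∑ l, S l * X a * S l) * (∑ m, S m * X a * S m)).trace
        = ∑ l, ∑ m, ((S m * S l) * X a * (S l * S m) * X a).trace := by
      intro a
      rw [Finset.sum_mul_sum]
      rw [Matrix.trace_sum]
      refine Finset.sum_congr rfl fun l _ => ?_
      rw [Matrix.trace_sum]
      refine Finset.sum_congr rfl fun m _ => ?_
      rw [show S l * X a * S l * (S m * X a * S m)
            = (S l) * ((X a * (S l * S m)) * X a) * (S m) by
          simp only [Matrix.mul_assoc]]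
      rw [Matrix.trace_mul_cycle]
      simp only [Matrix.mul_assoc]
    simp only [this]
    rw [Finset.sum_comm]
    refine Finset.sum_congr rfl fun l _ => ?_
    rw [Finset.sum_comm]
    refine Finset.sum_congr rfl fun m _ => ?_
    rw [key (S m * S l) (S l * S m), Matrix.trace_mul_comm, sq]
  have T2 : ∑ a, ((∑ l, S l * X a * S l) * X a).trace = ∑ l, (S l).trace ^ 2 := by
    have : ∀ a, ((∑ l, S l * X a * S l) * X a).trace
        = ∑ l, (S l * X a * S l * X a).trace := by
      intro a
      rw [Finset.sum_mul, Matrix.trace_sum]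
    simp only [this]
    rw [Finset.sum_comm]
    refine Finset.sum_congr rfl fun l _ => ?_
    rw [key (S l) (S l), sq]
  have T3 : ∑ a, (X a * (∑ l, S l * X a * S l)).trace = ∑ l, (S l).trace ^ 2 := by
    have : ∀ a, (X a * (∑ l, S l * X a * S l)).trace
        = ∑ l, (S l * X a * S l * X a).trace := by
      intro a
      rw [Finset.mul_sum, Matrix.trace_sum]
      refine Finset.sum_congr rfl fun l _ => ?_
      rw [Matrix.trace_mul_comm]
    simp only [this]
    rw [Finset.sum_comm]
    refine Finset.sum_congr rfl fun l _ => ?_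
    rw [key (S l) (S l), sq]
  have T4 : ∑ a, (X a * X a).trace = (d : ℂ) ^ 2 := by
    have : ∀ a : Fin (d ^ 2), (X a * X a).trace = 1 := by
      intro a; simpa using hXortho a a
    simp only [this, Finset.sum_const, Finset.card_univ, Fintype.card_fin, nsmul_eq_mul,
      mul_one]
    push_cast
    ring
  rw [T1, T2, T3, T4]
  ring
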